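/- Let f ∈ P([a,b]) (i.e., f nonnegative with f(λx+(1-λ)y) ≤ f(x)+f(y) for all λ ∈ [0,1]), f integrable on [a,b] with a < b, and α > 0. Then f((a+b)/2) ≤ (Γ(α+1)/(b-a)^α) [J_{a+}^α f(b) + J_{b-}^α f(a)] ≤ 2(f(a)+f(b)). -/

import Mathlib

open MeasureTheory intervalIntegral Set

theorem fractional_P_function (a b α : ℝ) (f : ℝ → ℝ)
    (hab : a < b) (hα : 0 < α)
    (hnonneg : ∀ x ∈ Set.Icc a b, 0 ≤ f x)
    (hP : ∀ x ∈ Set.Icc a b, ∀ y ∈ Set.Icc a b, ∀ l : ℝ, 0 ≤ l → l ≤ 1 →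
      f (l * x + (1 - l) * y) ≤ f x + f y)
    (hint : IntervalIntegrable f MeasureTheory.volume a b) :
    f ((a + b) / 2) ≤ Real.Gamma (α + 1) / (b - a) ^ α *
      ((1 / Real.Gamma α) * (∫ t in a..b, (b - t) ^ (α - 1) * f t) +
       (1 / Real.Gamma α) * (∫ t in a..b, (t - a) ^ (α - 1) * f t)) ∧
    Real.Gamma (α + 1) / (b - a) ^ α *
      ((1 / Real.Gamma α) * (∫ t in a..b, (b - t) ^ (α - 1) * f t) +
       (1 / Real.Gamma α) * (∫ t in a..b, (t - a) ^ (α - 1) * f t)) ≤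
      2 * (f a + f b) := by
  have hba : (0:ℝ) < b - a := by linarith
  have hΓ : 0 < Real.Gamma α := Real.Gamma_pos_of_pos hα
  have hP' : (0:ℝ) < (b - a) ^ α := Real.rpow_pos_of_pos hba α
  have hαm : (-1:ℝ) < α - 1 := by linarith
  have ha : a ∈ Set.Icc a b := Set.left_mem_Icc.2 hab.le
  have hb : b ∈ Set.Icc a b := Set.right_mem_Icc.2 hab.le
  -- bound f t ≤ f a + f b on Icc
  have key : ∀ t ∈ Set.Icc a b, f t ≤ f a + f b := by
    intro t ht
    have hl0 : 0 ≤ (b - t)/(b - a) := div_nonneg (by linarith [ht.2]) hba.le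
    have hl1 : (b - t)/(b - a) ≤ 1 := by
      rw [div_le_one hba]; linarith [ht.1]
    have h2 := hP a ha b hb _ hl0 hl1
    have heq : (b - t)/(b-a) * a + (1 - (b-t)/(b-a)) * b = t := by
      field_simp
      ring
    rwa [heq] at h2
  -- midpoint bound
  have mid : ∀ t ∈ Set.Icc a b, f ((a+b)/2) ≤ f t + f (a + b - t) := by
    intro t ht
    have ht' : a + b - t ∈ Set.Icc a b := by
      constructor <;> [linarith [ht.2]; linarith [ht.1]]
    have h2 := hP t ht (a + b - t) ht' (1/2) (by norm_num) (by norm_num)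
    have heq : (1/2 : ℝ) * t + (1 - 1/2) * (a + b - t) = (a + b)/2 := by ring
    rwa [heq] at h2
  -- integrability of weights
  have hg_int : IntervalIntegrable (fun t => (b - t) ^ (α-1)) volume a b := by
    have h1 : IntervalIntegrable (fun x : ℝ => x ^ (α-1)) volume (b - a) (b - b) :=
      (intervalIntegrable_rpow' hαm).symm
    simpa using h1.comp_sub_left b
  have hh_int : IntervalIntegrable (fun t => (t - a) ^ (α-1)) volume a b := by
    have h1 : IntervalIntegrable (fun x : ℝ => x ^ (α-1)) volume (a - a) (b - a) :=
      intervalIntegrable_rpow' hαm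
    simpa using h1.comp_sub_right a
  have hIoc : Set.uIoc a b = Set.Ioc a b := Set.uIoc_of_le hab.le
  have hfmeas : AEStronglyMeasurable f (volume.restrict (Set.uIoc a b)) := by
    rw [hIoc]; exact hint.aestronglyMeasurable
  -- integrability of products
  have prod_int : ∀ g : ℝ → ℝ, Measurable g → (∀ t ∈ Set.Icc a b, 0 ≤ g t) →
      IntervalIntegrable g volume a b →
      IntervalIntegrable (fun t => g t * f t) volume a b := by
    intro g hgm hgpos hgint
    apply IntervalIntegrable.mono_fun' (g := fun t => (f a + f b) * g t)
      (hgint.const_mul _) (hgm.aestronglyMeasurable.mul hfmeas)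
    rw [hIoc]
    refine (ae_restrict_iff' measurableSet_Ioc).2 ?_
    filter_upwards with t ht
    have ht' : t ∈ Set.Icc a b := Set.Ioc_subset_Icc_self ht
    have h1 := hnonneg t ht'
    have h2 := key t ht'
    have h3 := hgpos t ht'
    simp only [Pi.mul_apply, Real.norm_eq_abs]
    rw [abs_of_nonneg (mul_nonneg h3 h1)]
    calc g t * f t ≤ g t * (f a + f b) := mul_le_mul_of_nonneg_left h2 h3
      _ = (f a + f b) * g t := mul_comm _ _
  have hgmeas : Measurable (fun t : ℝ => (b - t) ^ (α-1)) := by fun_prop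
  have hhmeas : Measurable (fun t : ℝ => (t - a) ^ (α-1)) := by fun_prop
  have hgpos : ∀ t ∈ Set.Icc a b, (0:ℝ) ≤ (b - t) ^ (α-1) :=
    fun t ht => Real.rpow_nonneg (by linarith [ht.2]) _
  have hhpos : ∀ t ∈ Set.Icc a b, (0:ℝ) ≤ (t - a) ^ (α-1) :=
    fun t ht => Real.rpow_nonneg (by linarith [ht.1]) _
  have hI1 : IntervalIntegrable (fun t => (b - t) ^ (α-1) * f t) volume a b :=
    prod_int _ hgmeas hgpos hg_int
  have hI2 : IntervalIntegrable (fun t => (t - a) ^ (α-1) * f t) volume a b :=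
    prod_int _ hhmeas hhpos hh_int
  -- reflected integrand
  have hI3 : IntervalIntegrable (fun t => (b - t) ^ (α-1) * f (a + b - t)) volume a b := by
    have h1 := hI2.comp_sub_left (a + b)
    have h2 : ((a:ℝ) + b - a) = b := by ring
    have h3 : ((a:ℝ) + b - b) = a := by ring
    rw [h2, h3] at h1
    refine h1.symm.congr ?_
    intro t _
    dsimp only
    have : a + b - t - a = b - t := by ring
    rw [this]
  -- value of weight integrals
  have hIg : (∫ t in a..b, (b - t) ^ (α-1)) = (b-a)^α / α := by
    have h1 := intervalIntegral.integral_comp_sub_left (a := a) (b := b)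
      (fun x : ℝ => x ^ (α-1)) b
    simp only [sub_self] at h1
    rw [h1, integral_rpow (Or.inl hαm), sub_add_cancel,
      Real.zero_rpow hα.ne', sub_zero]
  have hIh : (∫ t in a..b, (t - a) ^ (α-1)) = (b-a)^α / α := by
    have h1 := intervalIntegral.integral_comp_sub_right (a := a) (b := b)
      (fun x : ℝ => x ^ (α-1)) a
    simp only [sub_self] at h1
    rw [h1, integral_rpow (Or.inl hαm), sub_add_cancel,
      Real.zero_rpow hα.ne', sub_zero]
  -- substitution identity
  have hsub : (∫ t in a..b, (b - t) ^ (α-1) * f (a + b - t))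
      = ∫ t in a..b, (t - a) ^ (α-1) * f t := by
    have h1 := intervalIntegral.integral_comp_sub_left (a := a) (b := b)
      (fun s : ℝ => (s - a) ^ (α-1) * f s) (a + b)
    have h2 : ((a:ℝ) + b - a) = b := by ring
    have h3 : ((a:ℝ) + b - b) = a := by ring
    rw [h2, h3] at h1
    rw [← h1]
    congr 1
    ext t
    have : a + b - t - a = b - t := by ring
    rw [this]
  set I₁ := ∫ t in a..b, (b - t) ^ (α-1) * f t with hI₁def
  set I₂ := ∫ t in a..b, (t - a) ^ (α-1) * f t with hI₂def
  -- left inequality core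
  have left_core : f ((a+b)/2) * ((b-a)^α / α) ≤ I₁ + I₂ := by
    have step : (∫ t in a..b, f ((a+b)/2) * (b - t) ^ (α-1))
        ≤ ∫ t in a..b, ((b - t) ^ (α-1) * f t + (b - t) ^ (α-1) * f (a + b - t)) := by
      apply intervalIntegral.integral_mono_on hab.le (hg_int.const_mul _) (hI1.add hI3)
      intro t ht
      have h1 := mid t ht
      have h3 := hgpos t ht
      calc f ((a+b)/2) * (b - t) ^ (α-1) = (b - t) ^ (α-1) * f ((a+b)/2) := mul_comm _ _
        _ ≤ (b - t) ^ (α-1) * (f t + f (a + b - t)) := mul_le_mul_of_nonneg_left h1 h3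
        _ = (b - t) ^ (α-1) * f t + (b - t) ^ (α-1) * f (a + b - t) := mul_add _ _ _
    rw [intervalIntegral.integral_const_mul, hIg,
      intervalIntegral.integral_add hI1 hI3, hsub] at step
    linarith
  -- right inequality core
  have r1 : I₁ ≤ (f a + f b) * ((b-a)^α / α) := by
    have step : I₁ ≤ ∫ t in a..b, (f a + f b) * (b - t) ^ (α-1) := by
      apply intervalIntegral.integral_mono_on hab.le hI1 (hg_int.const_mul _)
      intro t ht
      have h1 := key t ht
      have h2 := hgpos t ht
      calc (b - t) ^ (α-1) * f t ≤ (b - t) ^ (α-1) * (f a + f b) := mul_le_mul_of_nonneg_left h1 h2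
        _ = (f a + f b) * (b - t) ^ (α-1) := mul_comm _ _
    rwa [intervalIntegral.integral_const_mul, hIg] at step
  have r2 : I₂ ≤ (f a + f b) * ((b-a)^α / α) := by
    have step : I₂ ≤ ∫ t in a..b, (f a + f b) * (t - a) ^ (α-1) := by
      apply intervalIntegral.integral_mono_on hab.le hI2 (hh_int.const_mul _)
      intro t ht
      have h1 := key t ht
      have h2 := hhpos t ht
      calc (t - a) ^ (α-1) * f t ≤ (t - a) ^ (α-1) * (f a + f b) := mul_le_mul_of_nonneg_left h1 h2
        _ = (f a + f b) * (t - a) ^ (α-1) := mul_comm _ _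
    rwa [intervalIntegral.integral_const_mul, hIh] at step
  -- simplify Gamma expression
  have hexp : Real.Gamma (α + 1) / (b - a) ^ α *
      ((1 / Real.Gamma α) * I₁ + (1 / Real.Gamma α) * I₂)
      = α * (I₁ + I₂) / (b - a) ^ α := by
    rw [Real.Gamma_add_one hα.ne']
    field_simp
  rw [hexp]
  constructor
  · rw [le_div_iff₀ hP']
    have h1 : α * (f ((a+b)/2) * ((b-a)^α / α)) = f ((a+b)/2) * (b-a)^α := by
      field_simp
    have h2 := mul_le_mul_of_nonneg_left left_core hα.le
    rw [h1] at h2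
    exact h2
  · rw [div_le_iff₀ hP']
    have h1 : α * ((f a + f b) * ((b-a)^α / α)) = (f a + f b) * (b-a)^α := by
      field_simp
    have h2 := mul_le_mul_of_nonneg_left (add_le_add r1 r2) hα.le
    have h3 : α * ((f a + f b) * ((b-a)^α / α) + (f a + f b) * ((b-a)^α / α))
        = 2 * (f a + f b) * (b-a)^α := by field_simp; ring
    rw [h3] at h2
    linarith
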